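/- Let G be a connected graph and q(G) the largest eigenvalue of its signless Laplacian. Then q(G) ≤ max over vertices v of (d_v + (1/d_v) · Σ_{w ∈ N(v)} d_w), where d_v denotes the degree of v and N(v) its neighborhood. -/

import Mathlib

open Matrix SimpleGraph

noncomputable def signlessLaplacian {n : ℕ} (G : SimpleGraph (Fin n)) :
    Matrix (Fin n) (Fin n) ℝ :=
  letI := Classical.decRel G.Adj
  Matrix.diagonal (fun v => (G.degree v : ℝ)) + G.adjMatrix ℝ

def IsMaxEigenvalue {n : ℕ} (M : Matrix (Fin n) (Fin n) ℝ) (q : ℝ) : Prop :=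
  (∃ x : Fin n → ℝ, x ≠ 0 ∧ M.mulVec x = q • x) ∧
  ∀ (μ : ℝ) (x : Fin n → ℝ), x ≠ 0 → M.mulVec x = μ • x → μ ≤ q

noncomputable def deg {n : ℕ} (G : SimpleGraph (Fin n)) (v : Fin n) : ℕ :=
  letI := Classical.decRel G.Adj
  G.degree v

noncomputable def nbr {n : ℕ} (G : SimpleGraph (Fin n)) (v : Fin n) : Finset (Fin n) :=
  letI := Classical.decRel G.Adj
  G.neighborFinset v

theorem stmt1 {n : ℕ} (hn : 0 < n) (G : SimpleGraph (Fin n)) (hconn : G.Connected)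
    (q : ℝ) (hq : IsMaxEigenvalue (signlessLaplacian G) q) :
    q ≤ Finset.univ.sup' (Finset.univ_nonempty_iff.mpr (Fin.pos_iff_nonempty.mp hn))
      (fun v => (deg G v : ℝ) + (1 / (deg G v : ℝ)) * ∑ w ∈ nbr G v, (deg G w : ℝ)) := by
  letI := Classical.decRel G.Adj
  haveI : Nonempty (Fin n) := Fin.pos_iff_nonempty.mp hn
  obtain ⟨⟨x, hx0, hxe⟩, -⟩ := hq
  -- the eigen-equation componentwise
  have heq : ∀ v, (deg G v : ℝ) * x v + ∑ w ∈ nbr G v, x w = q * x v := by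
    intro v
    have := congrFun hxe v
    simpa [signlessLaplacian, deg, nbr, Matrix.add_mulVec, Matrix.mulVec_diagonal] using this
  by_cases hdeg : ∀ w, 0 < (deg G w : ℝ)
  · -- main case
    set y : Fin n → ℝ := fun w => x w / (deg G w : ℝ) with hy
    have hxy : ∀ w, x w = (deg G w : ℝ) * y w := by
      intro w
      show x w = (deg G w : ℝ) * (x w / (deg G w : ℝ))
      rw [mul_div_cancel₀ _ (ne_of_gt (hdeg w))]
    obtain ⟨v, hv⟩ : ∃ v, ∀ w, |y w| ≤ |y v| :=
      (Finset.exists_max_image Finset.univ (fun w => |y w|)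
        ⟨Classical.arbitrary _, Finset.mem_univ _⟩).imp
        fun v h w => h.2 w (Finset.mem_univ w)
    have hyv : 0 < |y v| := by
      obtain ⟨w, hw⟩ := Function.ne_iff.mp hx0
      have : y w ≠ 0 := by
        simp only [hy]
        exact div_ne_zero hw (ne_of_gt (hdeg w))
      exact lt_of_lt_of_le (abs_pos.mpr this) (hv w)
    have hdv := hdeg v
    have key : |q| * ((deg G v : ℝ) * |y v|) ≤
        (deg G v : ℝ) * ((deg G v : ℝ) * |y v|) + (∑ w ∈ nbr G v, (deg G w : ℝ)) * |y v| := by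
      have h1 := heq v
      rw [hxy v] at h1
      have h2 : q * ((deg G v : ℝ) * y v)
          = (deg G v : ℝ) * ((deg G v : ℝ) * y v) + ∑ w ∈ nbr G v, x w := by linarith
      calc |q| * ((deg G v : ℝ) * |y v|) = |q * ((deg G v : ℝ) * y v)| := by
            rw [abs_mul, abs_mul, abs_of_pos hdv]
        _ = |(deg G v : ℝ) * ((deg G v : ℝ) * y v) + ∑ w ∈ nbr G v, x w| := by rw [h2]
        _ ≤ |(deg G v : ℝ) * ((deg G v : ℝ) * y v)| + |∑ w ∈ nbr G v, x w| := abs_add_le _ _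
        _ = (deg G v : ℝ) * ((deg G v : ℝ) * |y v|) + |∑ w ∈ nbr G v, x w| := by
            rw [abs_mul, abs_mul, abs_of_pos hdv]
        _ ≤ (deg G v : ℝ) * ((deg G v : ℝ) * |y v|) + ∑ w ∈ nbr G v, |x w| := by
            gcongr
            exact Finset.abs_sum_le_sum_abs _ _
        _ ≤ (deg G v : ℝ) * ((deg G v : ℝ) * |y v|) + ∑ w ∈ nbr G v, (deg G w : ℝ) * |y v| := by
            gcongr with w _
            rw [hxy w, abs_mul, abs_of_pos (hdeg w)]
            exact mul_le_mul_of_nonneg_left (hv w) (le_of_lt (hdeg w))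
        _ = (deg G v : ℝ) * ((deg G v : ℝ) * |y v|) + (∑ w ∈ nbr G v, (deg G w : ℝ)) * |y v| := by
            rw [Finset.sum_mul]
    have habs : |q| ≤ (deg G v : ℝ) + (1 / (deg G v : ℝ)) * ∑ w ∈ nbr G v, (deg G w : ℝ) := by
      rw [div_mul_eq_mul_div, one_mul, ← sub_nonneg]
      have h3 : |q| * ((deg G v : ℝ) * |y v|) ≤
          ((deg G v : ℝ) + (∑ w ∈ nbr G v, (deg G w : ℝ)) / (deg G v : ℝ)) *
            ((deg G v : ℝ) * |y v|) := by
        rw [add_mul, div_mul_eq_mul_div, mul_div_assoc]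
        rw [mul_div_cancel_left₀ _ (ne_of_gt hdv)]
        linarith [key]
      have := le_of_mul_le_mul_right
        (by linarith [h3] : |q| * ((deg G v : ℝ) * |y v|) ≤
          ((deg G v : ℝ) + (∑ w ∈ nbr G v, (deg G w : ℝ)) / (deg G v : ℝ)) * ((deg G v : ℝ) * |y v|))
        (mul_pos hdv hyv)
      linarith
    exact le_trans (le_abs_self q) (le_trans habs
      (Finset.le_sup' (fun v => (deg G v : ℝ) + (1 / (deg G v : ℝ)) * ∑ w ∈ nbr G v, (deg G w : ℝ))
        (Finset.mem_univ v)))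
  · -- some vertex has degree 0 ⇒ n = 1, graph trivial, q = 0
    push_neg at hdeg
    obtain ⟨w, hw⟩ := hdeg
    have hw0 : deg G w = 0 := by
      have h : (deg G w : ℝ) = 0 := le_antisymm hw (by positivity)
      exact_mod_cast h
    have hnon : nbr G w = ∅ := Finset.card_eq_zero.mp hw0
    -- every vertex equals w: otherwise connectivity gives a neighbor of w
    have hall : ∀ u : Fin n, u = w := by
      intro u
      by_contra hu
      obtain ⟨p⟩ := hconn.preconnected w u
      cases p with
      | nil => exact hu rfl
      | cons h _ =>
        have : _ ∈ G.neighborFinset w := (SimpleGraph.mem_neighborFinset _ _ _).mpr h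
        rw [show G.neighborFinset w = nbr G w from by simp [nbr], hnon] at this
        exact absurd this (Finset.notMem_empty _)
    -- so all degrees 0 and q = 0
    have hdeg0 : ∀ u, deg G u = 0 := fun u => (hall u) ▸ hw0
    have hq0 : q = 0 := by
      obtain ⟨u, hu⟩ := Function.ne_iff.mp hx0
      have h1 := heq u
      have hn1 : nbr G u = ∅ := Finset.card_eq_zero.mp (hdeg0 u)
      rw [hdeg0 u, hn1] at h1
      have h2 : q * x u = 0 := by simpa using h1.symm
      rcases mul_eq_zero.mp h2 with h | h
      · exact h
      · exact absurd h hu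
    rw [hq0]
    refine le_trans ?_ (Finset.le_sup' _ (Finset.mem_univ w))
    simp [hw0, hnon]
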